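/- Let K ≥ 1 and let Γ, N, ϱ, B, σ², P, h₁, D_mod, T_max > 0, and for each k let R_k^down > 0, R_k^up > 0, D_k ≥ 0. Suppose (T_down, T_br, T_loc, T_up) has nonnegative entries and satisfies: ϱ·Σ_{k=1}^K D_k + T_down + N·(T_br + T_loc + T_up) ≤ T_max; T_down · R_k^down ≥ Γ·D_k for all k; T_br · B·log₂(1 + h₁·P/(σ²·B)) ≥ D_mod; and T_up · R_k^up ≥ D_mod for all k. Then T_loc ≤ T_max/N − D_mod/min_k R_k^up − D_mod/(B·log₂(1 + h₁·P/(σ²·B))) − (ϱ/N)·Σ_{k=1}^K D_k − (Γ/N)·max_k (D_k/R_k^down). (Optimality part of Theorem 1: the local training time of any feasible time allocation is at most the value given in closed form.) -/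

import Mathlib

/-- Optimality part of Theorem 1: any feasible time allocation has local
training time at most the closed-form value
`T_max/N − D_mod/min_k R_k^up − D_mod/(B·log₂(1 + h₁P/(σ²B)))
 − (ϱ/N)·Σ_k D_k − (Γ/N)·max_k (D_k/R_k^down)`. -/
theorem stmt_5
    (K : ℕ) (hK : 1 ≤ K)
    (Γ N ϱ B σ2 P h1 Dmod Tmax : ℝ)
    (hΓ : 0 < Γ) (hN : 0 < N) (hϱ : 0 < ϱ) (hB : 0 < B) (hσ2 : 0 < σ2)
    (hP : 0 < P) (hh1 : 0 < h1) (hDmod : 0 < Dmod) (hTmax : 0 < Tmax)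
    (Rdown Rup D : Fin K → ℝ)
    (hRdown : ∀ k, 0 < Rdown k) (hRup : ∀ k, 0 < Rup k) (hD : ∀ k, 0 ≤ D k)
    (hne : (Finset.univ : Finset (Fin K)).Nonempty)
    (Tdown Tbr Tloc Tup : ℝ)
    (hTdown0 : 0 ≤ Tdown) (hTbr0 : 0 ≤ Tbr) (hTloc0 : 0 ≤ Tloc) (hTup0 : 0 ≤ Tup)
    (hlatency : ϱ * (∑ k, D k) + Tdown + N * (Tbr + Tloc + Tup) ≤ Tmax)
    (hdown : ∀ k, Tdown * Rdown k ≥ Γ * D k)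
    (hbr : Tbr * (B * Real.logb 2 (1 + h1 * P / (σ2 * B))) ≥ Dmod)
    (hup : ∀ k, Tup * Rup k ≥ Dmod) :
    Tloc ≤ Tmax / N - Dmod / Finset.univ.inf' hne Rup
        - Dmod / (B * Real.logb 2 (1 + h1 * P / (σ2 * B)))
        - (ϱ / N) * ∑ k, D k
        - (Γ / N) * Finset.univ.sup' hne (fun k => D k / Rdown k) := by
  set L := B * Real.logb 2 (1 + h1 * P / (σ2 * B)) with hLdef
  have hx : (1:ℝ) < 1 + h1 * P / (σ2 * B) := by
    have : 0 < h1 * P / (σ2 * B) := by positivity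
    linarith
  have hlog : 0 < Real.logb 2 (1 + h1 * P / (σ2 * B)) :=
    Real.logb_pos (by norm_num) hx
  have hL : 0 < L := by rw [hLdef]; positivity
  obtain ⟨k0, -, hk0⟩ := Finset.exists_mem_eq_inf' hne Rup
  have hmin : 0 < Finset.univ.inf' hne Rup := hk0 ▸ hRup k0
  have hTup : Dmod / Finset.univ.inf' hne Rup ≤ Tup := by
    rw [hk0, div_le_iff₀ (hRup k0)]
    exact hup k0
  have hTbr : Dmod / L ≤ Tbr := by
    rw [div_le_iff₀ hL]; exact hbr
  obtain ⟨k1, -, hk1⟩ := Finset.exists_mem_eq_sup' hne (fun k => D k / Rdown k)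
  have hTdown : Γ * Finset.univ.sup' hne (fun k => D k / Rdown k) ≤ Tdown := by
    rw [hk1]
    rw [show Γ * (D k1 / Rdown k1) = Γ * D k1 / Rdown k1 by ring]
    rw [div_le_iff₀ (hRdown k1)]
    exact hdown k1
  rw [← mul_le_mul_iff_right₀ hN]
  have hexp : N * (Tmax / N - Dmod / Finset.univ.inf' hne Rup - Dmod / L
      - (ϱ / N) * ∑ k, D k
      - (Γ / N) * Finset.univ.sup' hne (fun k => D k / Rdown k))
      = Tmax - N * (Dmod / Finset.univ.inf' hne Rup) - N * (Dmod / L)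
        - ϱ * ∑ k, D k
        - Γ * Finset.univ.sup' hne (fun k => D k / Rdown k) := by
    field_simp
  rw [hexp]
  have h1' := mul_le_mul_of_nonneg_left hTup hN.le
  have h2' := mul_le_mul_of_nonneg_left hTbr hN.le
  nlinarith [hlatency, hTdown]
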